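/- Let d, k, p be natural numbers with k ≤ d and p ≤ d. Let γ be the linear endomorphism of ℝ^d (the space of functions Fin d → ℝ) sending the i-th standard basis vector e_i to −e_i when i < k and to e_i when i ≥ k. Then the trace of the induced linear endomorphism of the p-th exterior power ⋀^p(ℝ^d) equals the Krawtchouk value K_p^d(k). -/

import Mathlib

open Finset

/-- The (binary) Krawtchouk polynomial value
`K_p^d(k) = ∑_{j=0}^{p} (-1)^j * C(k,j) * C(d-k, p-j)`,
with the convention `C(m,n) = 0` when `n > m` (as for `Nat.choose`). -/
def krawtchouk (p d k : ℕ) : ℤ :=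
  ∑ j ∈ Finset.range (p + 1), (-1) ^ j * (Nat.choose k j) * (Nat.choose (d - k) (p - j))

section ExteriorPowerMap

variable {R : Type*} {M : Type*} [CommRing R] [AddCommGroup M] [Module R M]

theorem map_exteriorPower_le (f : M →ₗ[R] M) (p : ℕ) :
    Submodule.map (ExteriorAlgebra.map f).toLinearMap (⋀[R]^p M) ≤ ⋀[R]^p M := by
  have hbase : Submodule.map (ExteriorAlgebra.map f).toLinearMap
      (LinearMap.range (ExteriorAlgebra.ι R : M →ₗ[R] ExteriorAlgebra R M)) ≤
      LinearMap.range (ExteriorAlgebra.ι R : M →ₗ[R] ExteriorAlgebra R M) := by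
    rintro x hx
    obtain ⟨y, ⟨m, rfl⟩, rfl⟩ := hx
    exact ⟨f m, (ExteriorAlgebra.map_apply_ι f m).symm⟩
  induction p with
  | zero =>
    rw [show (⋀[R]^0 M) = (1 : Submodule R (ExteriorAlgebra R M)) from pow_zero _,
      Submodule.map_one]
  | succ n ih =>
    rw [show (⋀[R]^(n+1) M) = (⋀[R]^n M) *
        LinearMap.range (ExteriorAlgebra.ι R : M →ₗ[R] ExteriorAlgebra R M) from pow_succ _ _,
      Submodule.map_mul]
    exact mul_le_mul' ih hbase

/-- The endomorphism of the `p`-th exterior power `⋀[R]^p M` induced functorially by an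
endomorphism `f` of `M` (determined by `f` on decomposable wedges). -/
noncomputable def exteriorPowerMap (p : ℕ) (f : M →ₗ[R] M) : ⋀[R]^p M →ₗ[R] ⋀[R]^p M :=
  (ExteriorAlgebra.map f).toLinearMap.restrict
    (fun x hx => map_exteriorPower_le f p ⟨x, hx, rfl⟩)

end ExteriorPowerMap

noncomputable section KrawAux

open ExteriorAlgebra

variable (d p : ℕ)

/-- The family of wedges of standard basis vectors indexed by `p`-subsets of `Fin d`. -/
def wFam (s : {s : Finset (Fin d) // s.card = p}) : ExteriorAlgebra ℝ (Fin d → ℝ) :=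
  ExteriorAlgebra.ιMulti ℝ p fun i => Pi.single (s.1.orderIsoOfFin s.2 i : Fin d) (1 : ℝ)

/-- Dual alternating map: minor determinant on the columns indexed by `s`. -/
def dualF (s : {s : Finset (Fin d) // s.card = p}) :
    (Fin d → ℝ) [⋀^Fin p]→ₗ[ℝ] ℝ :=
  (Matrix.detRowAlternating).compLinearMap
    (LinearMap.funLeft ℝ ℝ fun j : Fin p => (s.1.orderIsoOfFin s.2 j : Fin d))

/-- The dual functional on the exterior algebra. -/
def phiF (s : {s : Finset (Fin d) // s.card = p}) :
    ExteriorAlgebra ℝ (Fin d → ℝ) →ₗ[ℝ] ℝ :=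
  ExteriorAlgebra.liftAlternating
    (Function.update (fun n => (0 : (Fin d → ℝ) [⋀^Fin n]→ₗ[ℝ] ℝ)) p (dualF d p s))

lemma phiF_wFam (s t : {s : Finset (Fin d) // s.card = p}) :
    phiF d p s (wFam d p t) = if s = t then 1 else 0 := by
  rw [phiF, wFam, ExteriorAlgebra.liftAlternating_apply_ιMulti, Function.update_self]
  have hval : dualF d p s (fun i => Pi.single (t.1.orderIsoOfFin t.2 i : Fin d) (1 : ℝ)) =
      Matrix.det (Matrix.of fun i j : Fin p =>
        if ((s.1.orderIsoOfFin s.2 j : Fin d) = (t.1.orderIsoOfFin t.2 i : Fin d)) then (1:ℝ)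
        else 0) := by
    rw [dualF, AlternatingMap.compLinearMap_apply]
    congr 1
    funext i j
    simp [LinearMap.funLeft, Pi.single_apply]
    congr 1
  rw [hval]
  by_cases hst : s = t
  · subst hst
    rw [if_pos rfl]
    have heq : (Matrix.of fun i j : Fin p =>
        if ((s.1.orderIsoOfFin s.2 j : Fin d) = (s.1.orderIsoOfFin s.2 i : Fin d)) then (1:ℝ)
        else 0) = (1 : Matrix (Fin p) (Fin p) ℝ) := by
      ext i j
      rw [Matrix.of_apply, Matrix.one_apply]
      by_cases h : i = j
      · subst h; rw [if_pos rfl, if_pos rfl]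
      · have h' : ¬ ((s.1.orderIsoOfFin s.2 j : Fin d) = (s.1.orderIsoOfFin s.2 i : Fin d)) :=
          fun hh => h (((s.1.orderIsoOfFin s.2).injective (Subtype.ext hh)).symm)
        rw [if_neg h', if_neg h]
    rw [heq, Matrix.det_one]
  · rw [if_neg hst]
    have hts : ¬ t.1 ⊆ s.1 := by
      intro hsub
      exact hst (Subtype.ext (Finset.eq_of_subset_of_card_le hsub
        (by rw [s.2, t.2])).symm)
    obtain ⟨x, hxt, hxs⟩ := Finset.not_subset.mp hts
    apply Matrix.det_eq_zero_of_row_eq_zero ((t.1.orderIsoOfFin t.2).symm ⟨x, hxt⟩)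
    intro j
    have hx : ((t.1.orderIsoOfFin t.2) ((t.1.orderIsoOfFin t.2).symm ⟨x, hxt⟩) : Fin d) = x := by
      simp
    rw [Matrix.of_apply, hx, if_neg]
    intro h
    exact hxs (h ▸ (s.1.orderIsoOfFin s.2 j).2)

lemma wFam_linearIndependent : LinearIndependent ℝ (wFam d p) := by
  rw [linearIndependent_iff']
  intro t g hsum s hs
  have h := congrArg (phiF d p s) hsum
  rw [map_sum, map_zero] at h
  simp only [map_smul, phiF_wFam, smul_eq_mul] at h
  rw [Finset.sum_eq_single s (fun b _ hb => by rw [if_neg (Ne.symm hb), mul_zero])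
    (fun hns => absurd hs hns), if_pos rfl, mul_one] at h
  exact h

lemma single_wedge_mem_span (r : Fin p → Fin d) :
    ExteriorAlgebra.ιMulti ℝ p (fun i => Pi.single (r i) (1:ℝ)) ∈
      Submodule.span ℝ (Set.range (wFam d p)) := by
  by_cases hr : Function.Injective r
  · set s : Finset (Fin d) := Finset.image r Finset.univ with hs
    have hcard : s.card = p := by
      rw [hs, Finset.card_image_of_injective _ hr, Finset.card_univ, Fintype.card_fin]
    have hbij : Function.Bijective (fun i : Fin p => (⟨r i, by
        simp [hs, Finset.mem_image]⟩ : {x // x ∈ s})) := by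
      rw [Fintype.bijective_iff_injective_and_card]
      constructor
      · intro a b hab
        exact hr (congrArg Subtype.val hab)
      · rw [Fintype.card_coe, hcard, Fintype.card_fin]
    set σ : Equiv.Perm (Fin p) :=
      (Equiv.ofBijective _ hbij).trans (s.orderIsoOfFin hcard).toEquiv.symm with hσ
    have hre : ∀ i, ((s.orderIsoOfFin hcard) (σ i) : Fin d) = r i := by
      intro i
      simp [hσ, Equiv.ofBijective]
    have key : ExteriorAlgebra.ιMulti ℝ p (fun i => Pi.single (r i) (1:ℝ)) =
        Equiv.Perm.sign σ • wFam d p ⟨s, hcard⟩ := by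
      rw [wFam]
      rw [← AlternatingMap.map_perm]
      congr 1
      funext i
      rw [Function.comp_apply, hre]
    rw [key]
    rcases Int.units_eq_one_or (Equiv.Perm.sign σ) with h | h
    · rw [h, one_smul]
      exact Submodule.subset_span (Set.mem_range_self _)
    · rw [h]
      rw [Units.neg_smul, one_smul]
      exact Submodule.neg_mem _ (Submodule.subset_span (Set.mem_range_self _))
  · obtain ⟨i, j, hij, hne⟩ := Function.not_injective_iff.mp hr
    rw [show ((ExteriorAlgebra.ιMulti ℝ p) fun i => (Pi.single (r i) 1 : Fin d → ℝ)) = 0 from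
      AlternatingMap.map_eq_zero_of_eq _ _ (by rw [hij]) hne]
    exact Submodule.zero_mem _

lemma wFam_span : Submodule.span ℝ (Set.range (wFam d p)) = ⋀[ℝ]^p (Fin d → ℝ) := by
  refine le_antisymm (Submodule.span_le.mpr ?_) ?_
  · rintro _ ⟨s, rfl⟩
    exact ExteriorAlgebra.ιMulti_range ℝ p (Set.mem_range_self _)
  · rw [← ExteriorAlgebra.ιMulti_span_fixedDegree]
    rw [Submodule.span_le]
    rintro _ ⟨v, rfl⟩
    have hv : v = fun i => ∑ j : Fin d, v i j • (Pi.single j 1 : Fin d → ℝ) := by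
      funext i a
      simp [Pi.single_apply, Finset.sum_apply, Finset.sum_ite_eq]
    rw [show ExteriorAlgebra.ιMulti ℝ p v =
        (ExteriorAlgebra.ιMulti ℝ p (M := Fin d → ℝ)).toMultilinearMap
          (fun i => ∑ j : Fin d, v i j • (Pi.single j 1 : Fin d → ℝ)) by rw [← hv]; rfl]
    rw [MultilinearMap.map_sum]
    apply Submodule.sum_mem
    intro r _
    have : (ExteriorAlgebra.ιMulti ℝ p (M := Fin d → ℝ)).toMultilinearMap
        (fun i => v i (r i) • (Pi.single (r i) 1 : Fin d → ℝ)) =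
        (∏ i, v i (r i)) • (ExteriorAlgebra.ιMulti ℝ p (M := Fin d → ℝ)).toMultilinearMap
          (fun i => Pi.single (r i) (1:ℝ)) :=
      MultilinearMap.map_smul_univ _ _ _
    rw [this]
    exact Submodule.smul_mem _ _ (single_wedge_mem_span d p r)

/-- The wedges as elements of the exterior power submodule. -/
def wFam' (s : {s : Finset (Fin d) // s.card = p}) : ⋀[ℝ]^p (Fin d → ℝ) :=
  ⟨wFam d p s, ExteriorAlgebra.ιMulti_range ℝ p (Set.mem_range_self _)⟩

lemma wFam'_linearIndependent : LinearIndependent ℝ (wFam' d p) :=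
  LinearIndependent.of_comp ((⋀[ℝ]^p (Fin d → ℝ)).subtype) (wFam_linearIndependent d p)

lemma wFam'_span : ⊤ ≤ Submodule.span ℝ (Set.range (wFam' d p)) := by
  have hinj := Submodule.map_injective_of_injective
    (Submodule.injective_subtype (⋀[ℝ]^p (Fin d → ℝ)))
  apply le_of_eq
  symm
  apply hinj
  rw [Submodule.map_span, Submodule.map_top, Submodule.range_subtype]
  rw [← Set.range_comp]
  exact wFam_span d p

/-- The basis of the `p`-th exterior power given by wedges of standard basis vectors. -/
def wBasis : Module.Basis {s : Finset (Fin d) // s.card = p} ℝ (⋀[ℝ]^p (Fin d → ℝ)) :=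
  Module.Basis.mk (wFam'_linearIndependent d p) (wFam'_span d p)

lemma map_ιMulti {R M : Type*} [CommRing R] [AddCommGroup M] [Module R M]
    (f : M →ₗ[R] M) (n : ℕ) (v : Fin n → M) :
    ExteriorAlgebra.map f (ExteriorAlgebra.ιMulti R n v) =
      ExteriorAlgebra.ιMulti R n (f ∘ v) := by
  rw [ExteriorAlgebra.ιMulti_apply, ExteriorAlgebra.ιMulti_apply,
    map_list_prod, List.map_ofFn]
  congr 1
  apply congrArg
  funext i
  exact ExteriorAlgebra.map_apply_ι f (v i)

lemma wBasis_apply (s : {s : Finset (Fin d) // s.card = p}) :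
    wBasis d p s = wFam' d p s :=
  Module.Basis.mk_apply _ _ s

lemma card_filter_lt (k : ℕ) (hkd : k ≤ d) :
    (Finset.univ.filter (fun i : Fin d => (i : ℕ) < k)).card = k := by
  rw [show Finset.univ.filter (fun i : Fin d => (i : ℕ) < k)
      = Finset.map (Fin.castLEOrderEmb hkd).toEmbedding Finset.univ from ?_]
  · rw [Finset.card_map, Finset.card_univ, Fintype.card_fin]
  · ext x
    rw [Finset.mem_filter, Finset.mem_map]
    constructor
    · rintro ⟨-, hx⟩
      exact ⟨⟨(x : ℕ), hx⟩, Finset.mem_univ _, by ext; rfl⟩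
    · rintro ⟨a, -, rfl⟩
      exact ⟨Finset.mem_univ _, a.2⟩

lemma fiber_card (k j : ℕ) (hkd : k ≤ d) (hj : j ≤ p) :
    ((Finset.powersetCard p (Finset.univ : Finset (Fin d))).filter
      (fun s => (s.filter (fun i : Fin d => (i : ℕ) < k)).card = j)).card =
      k.choose j * (d - k).choose (p - j) := by
  set P : Fin d → Prop := fun i => (i : ℕ) < k with hP
  set A : Finset (Fin d) := Finset.univ.filter (fun i => (i : ℕ) < k) with hA
  have hAcard : A.card = k := card_filter_lt d k hkd
  have hAmem : ∀ x : Fin d, x ∈ A ↔ (x : ℕ) < k := by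
    intro x; simp [hA]
  rw [show k.choose j * (d - k).choose (p - j)
      = ((Finset.powersetCard j A) ×ˢ (Finset.powersetCard (p - j) Aᶜ)).card from ?_]
  · refine Finset.card_bij' (fun s _ => (s.filter (fun i : Fin d => (i : ℕ) < k),
      s.filter (fun i : Fin d => ¬ (i : ℕ) < k)))
      (fun q _ => q.1 ∪ q.2) ?_ ?_ ?_ ?_
    · intro s hs
      rw [Finset.mem_filter, Finset.mem_powersetCard] at hs
      obtain ⟨⟨-, hscard⟩, hfil⟩ := hs
      rw [Finset.mem_product]
      constructor
      · rw [Finset.mem_powersetCard]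
        refine ⟨fun x hx => ?_, hfil⟩
        rw [hAmem]
        exact (Finset.mem_filter.mp hx).2
      · rw [Finset.mem_powersetCard]
        constructor
        · intro x hx
          rw [Finset.mem_compl, hAmem]
          exact (Finset.mem_filter.mp hx).2
        · have hsplit := Finset.card_filter_add_card_filter_not
            (p := fun i : Fin d => (i : ℕ) < k) (s := s)
          show (Finset.filter (fun i : Fin d => ¬ (i : ℕ) < k) s).card = p - j
          omega
    · intro q hq
      rw [Finset.mem_product, Finset.mem_powersetCard, Finset.mem_powersetCard] at hq
      obtain ⟨⟨hq1A, hq1c⟩, hq2A, hq2c⟩ := hq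
      have hdisj : Disjoint q.1 q.2 :=
        Disjoint.mono hq1A hq2A disjoint_compl_right
      have hfilq1 : (q.1 ∪ q.2).filter (fun i : Fin d => (i : ℕ) < k) = q.1 := by
        rw [Finset.filter_union,
          Finset.filter_eq_self.mpr (fun x hx => (hAmem x).mp (hq1A hx)),
          Finset.filter_eq_empty_iff.mpr
            (fun x hx => by simpa [hAmem] using (Finset.mem_compl.mp (hq2A hx))),
          Finset.union_empty]
      rw [Finset.mem_filter, Finset.mem_powersetCard]
      refine ⟨⟨Finset.subset_univ _, ?_⟩, by rw [hfilq1, hq1c]⟩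
      rw [Finset.card_union_of_disjoint hdisj, hq1c, hq2c]
      omega
    · intro s _
      exact Finset.filter_union_filter_not_eq _ s
    · intro q hq
      rw [Finset.mem_product, Finset.mem_powersetCard, Finset.mem_powersetCard] at hq
      obtain ⟨⟨hq1A, -⟩, hq2A, -⟩ := hq
      have hfilq1 : (q.1 ∪ q.2).filter (fun i : Fin d => (i : ℕ) < k) = q.1 := by
        rw [Finset.filter_union,
          Finset.filter_eq_self.mpr (fun x hx => (hAmem x).mp (hq1A hx)),
          Finset.filter_eq_empty_iff.mpr
            (fun x hx => by simpa [hAmem] using (Finset.mem_compl.mp (hq2A hx))),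
          Finset.union_empty]
      have hfilq2 : (q.1 ∪ q.2).filter (fun i : Fin d => ¬ (i : ℕ) < k) = q.2 := by
        rw [Finset.filter_union,
          Finset.filter_eq_empty_iff.mpr (fun x hx => by
            simpa using (hAmem x).mp (hq1A hx)),
          Finset.filter_eq_self.mpr
            (fun x hx => by simpa [hAmem] using (Finset.mem_compl.mp (hq2A hx))),
          Finset.empty_union]
      apply Prod.ext
      · exact hfilq1
      · exact hfilq2
  · rw [Finset.card_product, Finset.card_powersetCard, Finset.card_powersetCard,
      hAcard, Finset.card_compl, hAcard, Fintype.card_fin]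

lemma kraw_sum (k : ℕ) (hkd : k ≤ d) (hpd : p ≤ d) :
    ∑ s : {s : Finset (Fin d) // s.card = p},
      (-1:ℝ) ^ (s.1.filter (fun i : Fin d => (i : ℕ) < k)).card = (krawtchouk p d k : ℝ) := by
  rw [← Finset.sum_subtype (Finset.powersetCard p (Finset.univ : Finset (Fin d)))
      (fun s => by
        rw [Finset.mem_powersetCard]
        exact ⟨fun h => h.2, fun h => ⟨Finset.subset_univ _, h⟩⟩)
      (fun s => (-1:ℝ) ^ (s.filter (fun i : Fin d => (i : ℕ) < k)).card)]
  rw [show (∑ s ∈ Finset.powersetCard p (Finset.univ : Finset (Fin d)),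
      (-1:ℝ) ^ (s.filter (fun i : Fin d => (i : ℕ) < k)).card)
      = ∑ s ∈ Finset.powersetCard p (Finset.univ : Finset (Fin d)),
        (fun j => (-1:ℝ) ^ j) ((s.filter (fun i : Fin d => (i : ℕ) < k)).card) from rfl]
  rw [Finset.sum_comp]
  rw [Finset.sum_subset (Finset.image_subset_iff.mpr (fun s hs => by
      rw [Finset.mem_range, Nat.lt_succ_iff]
      calc (s.filter (fun i : Fin d => (i : ℕ) < k)).card ≤ s.card := Finset.card_filter_le _ _
        _ = p := (Finset.mem_powersetCard.mp hs).2))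
    (fun j _ hj => by
      rw [Finset.card_eq_zero.mpr (Finset.filter_eq_empty_iff.mpr
        (fun s hs hc => hj (Finset.mem_image.mpr ⟨s, hs, hc⟩))), zero_smul])]
  rw [krawtchouk, Int.cast_sum]
  refine Finset.sum_congr rfl (fun j hj => ?_)
  rw [Finset.mem_range, Nat.lt_succ_iff] at hj
  rw [show {s ∈ Finset.powersetCard p (Finset.univ : Finset (Fin d)) |
        (s.filter (fun i : Fin d => (i : ℕ) < k)).card = j}.card
      = k.choose j * (d - k).choose (p - j) from fiber_card d p k j hkd hj]
  push_cast
  ring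

end KrawAux

/-- Equation (4.2) of the paper: let `γ` be the linear endomorphism of `ℝ^d` sending the
`i`-th standard basis vector `e_i` to `-e_i` for `i < k` and to `e_i` for `i ≥ k`.  Then the
trace of the induced endomorphism of the `p`-th exterior power `⋀^p(ℝ^d)` is the Krawtchouk
value `K_p^d(k)`. -/
theorem trace_exteriorPowerMap_eq_krawtchouk (d k p : ℕ) (hkd : k ≤ d) (hpd : p ≤ d)
    (γ : (Fin d → ℝ) →ₗ[ℝ] (Fin d → ℝ))
    (hγ : ∀ i : Fin d, γ (Pi.single i 1) =
      if (i : ℕ) < k then -Pi.single i 1 else Pi.single i 1) :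
    LinearMap.trace ℝ _ (exteriorPowerMap p γ) = (krawtchouk p d k : ℝ) := by
  have hdiag : ∀ s : {s : Finset (Fin d) // s.card = p},
      exteriorPowerMap p γ (wFam' d p s) =
      ((-1:ℝ) ^ (s.1.filter (fun i : Fin d => (i : ℕ) < k)).card) • wFam' d p s := by
    intro s
    apply Subtype.ext
    have hval : (exteriorPowerMap p γ (wFam' d p s) : ExteriorAlgebra ℝ (Fin d → ℝ)) =
        (ExteriorAlgebra.map γ) (wFam d p s) := rfl
    rw [hval, wFam, map_ιMulti]
    have hcomp : γ ∘ (fun i => (Pi.single ((s.1.orderIsoOfFin s.2 i : Fin d)) 1 : Fin d → ℝ)) =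
        fun i => (if ((s.1.orderIsoOfFin s.2 i : Fin d) : ℕ) < k then (-1:ℝ) else 1) •
          (Pi.single ((s.1.orderIsoOfFin s.2 i : Fin d)) 1 : Fin d → ℝ) := by
      funext i
      rw [Function.comp_apply, hγ]
      by_cases h : ((s.1.orderIsoOfFin s.2 i : Fin d) : ℕ) < k
      · rw [if_pos h, if_pos h, neg_one_smul]
      · rw [if_neg h, if_neg h, one_smul]
    rw [hcomp]
    have hsmul : (ExteriorAlgebra.ιMulti ℝ p (M := Fin d → ℝ))
        (fun i => (if ((s.1.orderIsoOfFin s.2 i : Fin d) : ℕ) < k then (-1:ℝ) else 1) •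
          (Pi.single ((s.1.orderIsoOfFin s.2 i : Fin d)) 1 : Fin d → ℝ)) =
        (∏ i, (if ((s.1.orderIsoOfFin s.2 i : Fin d) : ℕ) < k then (-1:ℝ) else 1)) •
        (ExteriorAlgebra.ιMulti ℝ p (M := Fin d → ℝ))
          (fun i => (Pi.single ((s.1.orderIsoOfFin s.2 i : Fin d)) 1 : Fin d → ℝ)) :=
      MultilinearMap.map_smul_univ
        (ExteriorAlgebra.ιMulti ℝ p (M := Fin d → ℝ)).toMultilinearMap _ _
    rw [hsmul]
    have hprod : (∏ i, (if ((s.1.orderIsoOfFin s.2 i : Fin d) : ℕ) < k then (-1:ℝ) else 1)) =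
        (-1:ℝ) ^ (s.1.filter (fun i : Fin d => (i : ℕ) < k)).card := by
      have h1 : (∏ i, (if ((s.1.orderIsoOfFin s.2 i : Fin d) : ℕ) < k then (-1:ℝ) else 1)) =
          ∏ x : {x // x ∈ s.1}, (if ((x : Fin d) : ℕ) < k then (-1:ℝ) else 1) :=
        Equiv.prod_comp (s.1.orderIsoOfFin s.2).toEquiv
          (fun x : {x // x ∈ s.1} => if ((x : Fin d) : ℕ) < k then (-1:ℝ) else 1)
      rw [h1, Finset.prod_coe_sort s.1 (fun x : Fin d => if (x : ℕ) < k then (-1:ℝ) else 1),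
        Finset.prod_ite, Finset.prod_const, Finset.prod_const_one, mul_one]
    rw [hprod]
    rfl
  rw [LinearMap.trace_eq_matrix_trace ℝ (wBasis d p) (exteriorPowerMap p γ), Matrix.trace]
  have hentry : ∀ s : {s : Finset (Fin d) // s.card = p},
      Matrix.diag (LinearMap.toMatrix (wBasis d p) (wBasis d p) (exteriorPowerMap p γ)) s =
      (-1:ℝ) ^ (s.1.filter (fun i : Fin d => (i : ℕ) < k)).card := by
    intro s
    rw [Matrix.diag_apply, LinearMap.toMatrix_apply, wBasis_apply, hdiag s, ← wBasis_apply,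
      map_smul, Module.Basis.repr_self, Finsupp.smul_apply, Finsupp.single_eq_same, smul_eq_mul,
      mul_one]
  rw [Finset.sum_congr rfl (fun s _ => hentry s)]
  exact kraw_sum d p k hkd hpd
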